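/- Let d ≥ 4 be an integer and let r > 0 satisfy (d−3)·e^{2r} > (d−1)^2. Set V := ω_d · ∫_0^r sinh(u)^{d−1} du. Then log V ≤ r(d−1) + log( ω_d / ((d−1)·2^{d−1}) ) ≤ log( (d−3)e^{2r} / ((d−3)e^{2r} − (d−1)^2) ) + log V. -/

import Mathlib

open Real intervalIntegral

lemma aux_integral (c : ℝ) (hc : c ≠ 0) (r : ℝ) :
    ∫ u in (0:ℝ)..r, Real.exp (c * u) = (Real.exp (c * r) - 1) / c := by
  have hderiv : ∀ u ∈ Set.uIcc (0:ℝ) r,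
      HasDerivAt (fun x => Real.exp (c * x) / c) (Real.exp (c * u)) u := by
    intro u _
    have h1 : HasDerivAt (fun x : ℝ => c * x) c u := by
      simpa using (hasDerivAt_id u).const_mul c
    have h3 := h1.exp.div_const c
    simpa [mul_div_assoc, mul_comm, mul_div_cancel_right₀, hc] using h3
  have hint : IntervalIntegrable (fun u => Real.exp (c * u)) MeasureTheory.volume 0 r :=
    (by continuity : Continuous fun u : ℝ => Real.exp (c * u)).intervalIntegrable _ _
  rw [intervalIntegral.integral_eq_sub_of_hasDerivAt hderiv hint]
  simp [sub_div]

lemma aux_sinh_nonneg {u : ℝ} (hu : 0 ≤ u) : 0 ≤ Real.sinh u := by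
  rw [Real.sinh_eq]
  have := Real.exp_le_exp.2 (show -u ≤ u by linarith)
  linarith

lemma aux_sinh_pos {u : ℝ} (hu : 0 < u) : 0 < Real.sinh u := by
  rw [Real.sinh_eq]
  have := Real.exp_lt_exp.2 (show -u < u by linarith)
  linarith

lemma aux_key (m k A B : ℝ) (hm : 0 < m) (hk : 0 < k)
    (hA : 0 < A) (hk2 : k < m ^ 2) (hD : 0 < k * A - m ^ 2) :
    A * B / m ≤ k * A / (k * A - m ^ 2) * ((A * B - 1) / m - m * ((B - 1) / k)) := by
  rw [← sub_nonneg]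
  have expand : k * A / (k * A - m ^ 2) * ((A * B - 1) / m - m * ((B - 1) / k)) - A * B / m
      = k * A * (m ^ 2 - k) / (m * k * (k * A - m ^ 2)) := by
    field_simp
    ring
  rw [expand]
  apply div_nonneg
  · nlinarith
  · have := mul_pos (mul_pos hm hk) hD
    linarith

/-- Surface area of the (d-1)-dimensional Euclidean unit sphere. -/
noncomputable def omegaSphere (d : ℕ) : ℝ :=
  2 * Real.pi ^ ((d : ℝ) / 2) / Real.Gamma ((d : ℝ) / 2)

/-- Volume of a hyperbolic ball of radius `r` in `d`-dimensional hyperbolic space. -/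
noncomputable def hypBallVol (d : ℕ) (r : ℝ) : ℝ :=
  omegaSphere d * ∫ u in (0:ℝ)..r, Real.sinh u ^ (d - 1)

theorem stmt_11 (d : ℕ) (hd : 4 ≤ d) (r : ℝ) (hr : 0 < r)
    (h : ((d : ℝ) - 1) ^ 2 < ((d : ℝ) - 3) * Real.exp (2 * r)) :
    Real.log (hypBallVol d r) ≤
        r * ((d : ℝ) - 1) + Real.log (omegaSphere d / (((d : ℝ) - 1) * 2 ^ (d - 1))) ∧
      r * ((d : ℝ) - 1) + Real.log (omegaSphere d / (((d : ℝ) - 1) * 2 ^ (d - 1))) ≤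
        Real.log (((d : ℝ) - 3) * Real.exp (2 * r) /
            (((d : ℝ) - 3) * Real.exp (2 * r) - ((d : ℝ) - 1) ^ 2)) +
          Real.log (hypBallVol d r) := by
  set m : ℝ := (d : ℝ) - 1 with hm_def
  set k : ℝ := (d : ℝ) - 3 with hk_def
  have hd4 : (4 : ℝ) ≤ (d : ℝ) := by exact_mod_cast hd
  have hm3 : (3 : ℝ) ≤ m := by simp only [hm_def]; linarith
  have hk1 : (1 : ℝ) ≤ k := by simp only [hk_def]; linarith
  have hmpos : (0:ℝ) < m := by linarith
  have hkpos : (0:ℝ) < k := by linarith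
  have hmk : m = k + 2 := by simp only [hm_def, hk_def]; ring
  have hcast : ((d - 1 : ℕ) : ℝ) = m := by
    have h1 : 1 ≤ d := by omega
    push_cast [h1]; ring
  have hppos : (0:ℝ) < 2 ^ (d - 1) := by positivity
  have hce : ∀ c : ℝ, Continuous fun u : ℝ => Real.exp (c * u) := fun c => by continuity
  -- pointwise bounds on [0, r]
  have hub : ∀ u ∈ Set.Icc (0:ℝ) r, Real.sinh u ^ (d - 1) ≤ Real.exp (m * u) / 2 ^ (d - 1) := by
    intro u hu
    have hsnn : 0 ≤ Real.sinh u := aux_sinh_nonneg hu.1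
    have h1 : Real.sinh u ≤ Real.exp u / 2 := by
      rw [Real.sinh_eq]
      have := Real.exp_pos (-u)
      linarith
    calc Real.sinh u ^ (d - 1) ≤ (Real.exp u / 2) ^ (d - 1) := pow_le_pow_left₀ hsnn h1 _
      _ = Real.exp u ^ (d - 1) / 2 ^ (d - 1) := by rw [div_pow]
      _ = Real.exp (m * u) / 2 ^ (d - 1) := by
          rw [← hcast, ← Real.exp_nat_mul]
  have hlb : ∀ u ∈ Set.Icc (0:ℝ) r,
      (Real.exp (m * u) - m * Real.exp (k * u)) / 2 ^ (d - 1) ≤ Real.sinh u ^ (d - 1) := by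
    intro u hu
    have hu0 : 0 ≤ u := hu.1
    have hbern : 1 + ((d - 1 : ℕ) : ℝ) * (-Real.exp (-2 * u)) ≤
        (1 + (-Real.exp (-2 * u))) ^ (d - 1) := by
      apply one_add_mul_le_pow
      have : Real.exp (-2 * u) ≤ 1 := Real.exp_le_one_iff.2 (by linarith)
      linarith
    have hepos : (0:ℝ) ≤ Real.exp u ^ (d - 1) := by positivity
    have hmul := mul_le_mul_of_nonneg_left hbern hepos
    have key : Real.exp (m * u) - m * Real.exp (k * u) ≤ (2 * Real.sinh u) ^ (d - 1) := by
      have e1 : Real.exp u * (1 + (-Real.exp (-2 * u))) = 2 * Real.sinh u := by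
        have h2 : Real.exp u * Real.exp (-2 * u) = Real.exp (-u) := by
          rw [← Real.exp_add]; ring_nf
        rw [Real.sinh_eq]
        linear_combination -h2
      have e2 : Real.exp u ^ (d - 1) * (1 + ((d - 1 : ℕ) : ℝ) * (-Real.exp (-2 * u))) =
          Real.exp (m * u) - m * Real.exp (k * u) := by
        have h3 : Real.exp (m * u) * Real.exp (-2 * u) = Real.exp (k * u) := by
          rw [← Real.exp_add]; congr 1; rw [hmk]; ring
        rw [← Real.exp_nat_mul, hcast]
        linear_combination -m * h3
      calc Real.exp (m * u) - m * Real.exp (k * u)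
          = Real.exp u ^ (d - 1) * (1 + ((d - 1 : ℕ) : ℝ) * (-Real.exp (-2 * u))) := e2.symm
        _ ≤ Real.exp u ^ (d - 1) * (1 + (-Real.exp (-2 * u))) ^ (d - 1) := hmul
        _ = (Real.exp u * (1 + (-Real.exp (-2 * u)))) ^ (d - 1) := (mul_pow _ _ _).symm
        _ = (2 * Real.sinh u) ^ (d - 1) := by rw [e1]
    rw [div_le_iff₀ hppos]
    calc Real.exp (m * u) - m * Real.exp (k * u) ≤ (2 * Real.sinh u) ^ (d - 1) := key
      _ = Real.sinh u ^ (d - 1) * 2 ^ (d - 1) := by rw [mul_pow]; ring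
  -- integrability
  have hint1 : IntervalIntegrable (fun u => Real.sinh u ^ (d - 1)) MeasureTheory.volume 0 r :=
    (Real.continuous_sinh.pow _).intervalIntegrable _ _
  have hint2 : IntervalIntegrable (fun u => Real.exp (m * u) / 2 ^ (d - 1)) MeasureTheory.volume 0 r :=
    ((hce m).div_const _).intervalIntegrable _ _
  have hint3 : IntervalIntegrable (fun u => (Real.exp (m * u) - m * Real.exp (k * u)) / 2 ^ (d - 1))
      MeasureTheory.volume 0 r :=
    (((hce m).sub (continuous_const.mul (hce k))).div_const _).intervalIntegrable _ _
  set I : ℝ := ∫ u in (0:ℝ)..r, Real.sinh u ^ (d - 1) with hI_def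
  have hIub : I ≤ (Real.exp (m * r) - 1) / m / 2 ^ (d - 1) := by
    have h1 := intervalIntegral.integral_mono_on hr.le hint1 hint2 hub
    rw [hI_def]
    calc (∫ u in (0:ℝ)..r, Real.sinh u ^ (d - 1))
        ≤ ∫ u in (0:ℝ)..r, Real.exp (m * u) / 2 ^ (d - 1) := h1
      _ = (∫ u in (0:ℝ)..r, Real.exp (m * u)) / 2 ^ (d - 1) := intervalIntegral.integral_div _ _
      _ = (Real.exp (m * r) - 1) / m / 2 ^ (d - 1) := by rw [aux_integral m hmpos.ne' r]
  have hIlb : ((Real.exp (m * r) - 1) / m - m * ((Real.exp (k * r) - 1) / k)) / 2 ^ (d - 1) ≤ I := by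
    have h1 := intervalIntegral.integral_mono_on hr.le hint3 hint1 hlb
    have h2 : (∫ u in (0:ℝ)..r, (Real.exp (m * u) - m * Real.exp (k * u)) / 2 ^ (d - 1))
        = ((Real.exp (m * r) - 1) / m - m * ((Real.exp (k * r) - 1) / k)) / 2 ^ (d - 1) := by
      rw [intervalIntegral.integral_div]
      congr 1
      rw [intervalIntegral.integral_sub ((hce m).intervalIntegrable _ _)
        (Continuous.intervalIntegrable (u := fun u => m * Real.exp (k * u)) (continuous_const.mul (hce k)) _ _)]
      rw [intervalIntegral.integral_const_mul, aux_integral m hmpos.ne' r, aux_integral k hkpos.ne' r]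
    rw [← h2]; exact h1
  have hIpos : 0 < I := by
    apply intervalIntegral.intervalIntegral_pos_of_pos_on hint1 _ hr
    intro u hu
    exact pow_pos (aux_sinh_pos hu.1) _
  have hωpos : 0 < omegaSphere d := by
    rw [omegaSphere]
    have h1 : 0 < Real.pi ^ ((d : ℝ) / 2) := Real.rpow_pos_of_pos Real.pi_pos _
    have h2 : 0 < Real.Gamma ((d : ℝ) / 2) := Real.Gamma_pos_of_pos (by positivity)
    positivity
  have hVpos : 0 < hypBallVol d r := by
    rw [hypBallVol]; exact mul_pos hωpos hIpos
  have hV : hypBallVol d r = omegaSphere d * I := rfl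
  have hDpos : (0:ℝ) < k * Real.exp (2 * r) - m ^ 2 := by linarith
  have hQpos : 0 < omegaSphere d / (m * 2 ^ (d - 1)) := by positivity
  have hexp : Real.exp (2 * r) * Real.exp (k * r) = Real.exp (m * r) := by
    rw [← Real.exp_add]; congr 1; rw [hmk]; ring
  constructor
  · -- upper bound
    have hVle : hypBallVol d r ≤ Real.exp (r * m) * (omegaSphere d / (m * 2 ^ (d - 1))) := by
      rw [hV]
      have h1 : I ≤ Real.exp (m * r) / m / 2 ^ (d - 1) := by
        refine hIub.trans ?_
        gcongr
        linarith [Real.exp_pos (m * r)]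
      calc omegaSphere d * I ≤ omegaSphere d * (Real.exp (m * r) / m / 2 ^ (d - 1)) :=
            mul_le_mul_of_nonneg_left h1 hωpos.le
        _ = Real.exp (r * m) * (omegaSphere d / (m * 2 ^ (d - 1))) := by
            rw [mul_comm m r]; field_simp
    calc Real.log (hypBallVol d r)
        ≤ Real.log (Real.exp (r * m) * (omegaSphere d / (m * 2 ^ (d - 1)))) :=
          Real.log_le_log hVpos hVle
      _ = r * m + Real.log (omegaSphere d / (m * 2 ^ (d - 1))) := by
          rw [Real.log_mul (Real.exp_ne_zero _) hQpos.ne', Real.log_exp]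
  · -- lower bound
    have hk2 : k < m ^ 2 := by nlinarith
    have key : Real.exp (m * r) / m ≤ k * Real.exp (2 * r) / (k * Real.exp (2 * r) - m ^ 2) *
        ((Real.exp (m * r) - 1) / m - m * ((Real.exp (k * r) - 1) / k)) := by
      rw [← hexp]
      exact aux_key m k _ _ hmpos hkpos (Real.exp_pos _) hk2 hDpos
    have hVge : Real.exp (r * m) * (omegaSphere d / (m * 2 ^ (d - 1))) ≤
        k * Real.exp (2 * r) / (k * Real.exp (2 * r) - m ^ 2) * hypBallVol d r := by
      rw [hV]
      have hC : 0 < k * Real.exp (2 * r) / (k * Real.exp (2 * r) - m ^ 2) := by positivity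
      calc Real.exp (r * m) * (omegaSphere d / (m * 2 ^ (d - 1)))
          = omegaSphere d / 2 ^ (d - 1) * (Real.exp (m * r) / m) := by
            rw [mul_comm m r]; field_simp
        _ ≤ omegaSphere d / 2 ^ (d - 1) * (k * Real.exp (2 * r) / (k * Real.exp (2 * r) - m ^ 2) *
              ((Real.exp (m * r) - 1) / m - m * ((Real.exp (k * r) - 1) / k))) :=
            mul_le_mul_of_nonneg_left key (by positivity)
        _ = k * Real.exp (2 * r) / (k * Real.exp (2 * r) - m ^ 2) *
              (((Real.exp (m * r) - 1) / m - m * ((Real.exp (k * r) - 1) / k)) / 2 ^ (d - 1) *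
                omegaSphere d) := by ring
        _ ≤ k * Real.exp (2 * r) / (k * Real.exp (2 * r) - m ^ 2) * (I * omegaSphere d) :=
            mul_le_mul_of_nonneg_left (mul_le_mul_of_nonneg_right hIlb hωpos.le) hC.le
        _ = k * Real.exp (2 * r) / (k * Real.exp (2 * r) - m ^ 2) * (omegaSphere d * I) := by ring
    calc r * m + Real.log (omegaSphere d / (m * 2 ^ (d - 1)))
        = Real.log (Real.exp (r * m) * (omegaSphere d / (m * 2 ^ (d - 1)))) := by
          rw [Real.log_mul (Real.exp_ne_zero _) hQpos.ne', Real.log_exp]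
      _ ≤ Real.log (k * Real.exp (2 * r) / (k * Real.exp (2 * r) - m ^ 2) * hypBallVol d r) :=
          Real.log_le_log (by positivity) hVge
      _ = Real.log (k * Real.exp (2 * r) / (k * Real.exp (2 * r) - m ^ 2)) +
            Real.log (hypBallVol d r) := by
          rw [Real.log_mul (by positivity) hVpos.ne']
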